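/- (Second theorem of Ostrowski) Let K be a field complete with respect to an absolute value |·| that is archimedean (not ultrametric). Then K is isomorphic to ℝ or to ℂ: there exists a ring isomorphism from K onto ℝ, or onto ℂ, which is a homeomorphism for the topology on K induced by |·| and the usual topology on ℝ or ℂ. -/

import Mathlib

/-- The topology on a field `K` induced by an absolute value `f : K → ℝ`,
namely the topology of the metric `d(x,y) = f (x - y)`, generated by the open balls. -/
def absTopology {K : Type*} [Field K] (f : AbsoluteValue K ℝ) : TopologicalSpace K :=
  TopologicalSpace.generateFrom
    {s : Set K | ∃ (a : K) (r : ℝ), 0 < r ∧ s = {x : K | f (x - a) < r}}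

/-- A sequence in a field `K` is Cauchy with respect to the absolute value `f`. -/
def AbsCauchySeq {K : Type*} [Field K] (f : AbsoluteValue K ℝ) (x : ℕ → K) : Prop :=
  ∀ ε : ℝ, 0 < ε → ∃ N : ℕ, ∀ m ≥ N, ∀ n ≥ N, f (x m - x n) < ε

/-- A field `K` is complete with respect to the absolute value `f` if every Cauchy
sequence (for the metric `d(x,y) = f (x - y)`) converges. -/
def AbsComplete {K : Type*} [Field K] (f : AbsoluteValue K ℝ) : Prop :=
  ∀ x : ℕ → K, AbsCauchySeq f x →
    ∃ l : K, ∀ ε : ℝ, 0 < ε → ∃ N : ℕ, ∀ n ≥ N, f (x n - l) < ε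

section Aux
open Filter Real Finset

lemma auxLeOne {a B : ℝ} (h : ∀ n : ℕ, a ^ n ≤ B) (hlt : 1 < a) : False := by
  obtain ⟨n, hn⟩ := ((tendsto_pow_atTop_atTop_of_one_lt hlt).eventually_gt_atTop B).exists
  exact absurd (h n) (not_le.mpr hn)

lemma auxLeOnePoly {a D : ℝ} (ha : 0 ≤ a) (m : ℕ)
    (h : ∀ n : ℕ, 1 ≤ n → a ^ n ≤ D * (n : ℝ) ^ m) : a ≤ 1 := by
  by_contra hlt
  push_neg at hlt
  have h1 : Tendsto (fun n : ℕ => D * ((n : ℝ) ^ m / a ^ n)) atTop (nhds (D * 0)) :=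
    (tendsto_pow_const_div_const_pow_of_one_lt m hlt).const_mul D
  rw [mul_zero] at h1
  have h2 : ∀ᶠ n : ℕ in atTop, 1 ≤ D * ((n : ℝ) ^ m / a ^ n) := by
    filter_upwards [eventually_ge_atTop 1] with n hn
    have hpow : (0:ℝ) < a ^ n := pow_pos (lt_trans one_pos hlt) n
    rw [mul_div_assoc', one_le_div hpow]
    exact h n hn
  have := ge_of_tendsto h1 h2
  linarith

variable {K : Type*} [Field K]

lemma sum_pow_le (f : AbsoluteValue K ℝ) {c : ℝ} (hc : 0 < c) :
    ∀ (k : ℕ) (x : ℕ → K) (M : ℝ), 0 ≤ M → (∀ i < 2^k, f (x i) ^ c ≤ M) →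
      f (∑ i ∈ range (2^k), x i) ^ c ≤ ((2:ℝ) ^ k) ^ c * M := by
  intro k
  induction k with
  | zero => intro x M hM hx; simpa using hx 0 (by norm_num)
  | succ k ih =>
    intro x M hM hx
    have h2k : (2:ℕ) ^ (k+1) = 2^k + 2^k := by ring
    rw [h2k, Finset.sum_range_add]
    set A := ∑ i ∈ range (2^k), x i
    set B := ∑ i ∈ range (2^k), x (2^k + i)
    have hA : f A ^ c ≤ ((2:ℝ)^k)^c * M := ih x M hM fun i hi => hx i (by omega)
    have hB : f B ^ c ≤ ((2:ℝ)^k)^c * M := ih (fun i => x (2^k + i)) M hM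
      fun i hi => hx (2^k+i) (by omega)
    have hmax : f (A + B) ≤ 2 * max (f A) (f B) := by
      calc f (A + B) ≤ f A + f B := f.add_le A B
      _ ≤ 2 * max (f A) (f B) := by
          rcases le_total (f A) (f B) with h | h <;> simp [max_eq_right, max_eq_left, h] <;> linarith
    have hAB : f (A + B) ^ c ≤ (2:ℝ)^c * max (f A ^ c) (f B ^ c) := by
      calc f (A + B) ^ c ≤ (2 * max (f A) (f B)) ^ c :=
            Real.rpow_le_rpow (f.nonneg _) hmax hc.le
      _ = (2:ℝ)^c * (max (f A) (f B)) ^ c :=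
            Real.mul_rpow (by norm_num) (le_max_of_le_left (f.nonneg _))
      _ = (2:ℝ)^c * max (f A ^ c) (f B ^ c) := by
            rcases le_total (f A) (f B) with h | h
            · rw [max_eq_right h, max_eq_right (Real.rpow_le_rpow (f.nonneg _) h hc.le)]
            · rw [max_eq_left h, max_eq_left (Real.rpow_le_rpow (f.nonneg _) h hc.le)]
    calc f (A + B) ^ c ≤ (2:ℝ)^c * max (f A ^ c) (f B ^ c) := hAB
      _ ≤ (2:ℝ)^c * (((2:ℝ)^k)^c * M) := by
          apply mul_le_mul_of_nonneg_left _ (Real.rpow_nonneg (by norm_num) c)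
          exact max_le hA hB
      _ = ((2:ℝ)^(k+1))^c * M := by
          rw [← mul_assoc, ← Real.mul_rpow (by norm_num) (by positivity), pow_succ]
          ring_nf

/-- Artin's trick : the triangle inequality for `f ^ c`. -/
lemma artin_add_le (f : AbsoluteValue K ℝ) {c : ℝ} (hc : 0 < c)
    (hFn : ∀ n : ℕ, f (n : K) ^ c = (n : ℝ)) (x y : K) :
    f (x + y) ^ c ≤ f x ^ c + f y ^ c := by
  have hF0 : ∀ t : K, 0 ≤ f t ^ c := fun t => Real.rpow_nonneg (f.nonneg t) c
  have hFmul : ∀ a b : K, f (a * b) ^ c = f a ^ c * f b ^ c := fun a b => by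
    rw [map_mul, Real.mul_rpow (f.nonneg a) (f.nonneg b)]
  have hFpow : ∀ (a : K) (n : ℕ), f (a ^ n) ^ c = (f a ^ c) ^ n := fun a n => by
    rw [map_pow, ← Real.rpow_natCast (f a) n, ← Real.rpow_mul (f.nonneg a),
      mul_comm, Real.rpow_mul (f.nonneg a), Real.rpow_natCast]
  by_cases h0 : f x ^ c + f y ^ c = 0
  · have hx : f x ^ c = 0 := le_antisymm (by linarith [hF0 x, hF0 y]) (hF0 x)
    have hy : f y ^ c = 0 := by linarith [hF0 x, hF0 y]
    have hx' : x = 0 := f.eq_zero.mp ((Real.rpow_eq_zero (f.nonneg x) hc.ne').mp hx)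
    have hy' : y = 0 := f.eq_zero.mp ((Real.rpow_eq_zero (f.nonneg y) hc.ne').mp hy)
    simp [hx', hy', Real.zero_rpow hc.ne', hx, hy]
  have hpos : 0 < f x ^ c + f y ^ c := lt_of_le_of_ne (add_nonneg (hF0 x) (hF0 y)) (Ne.symm h0)
  rw [← div_le_one hpos]
  set m : ℕ := ⌈c⌉₊ with hm
  apply auxLeOnePoly (div_nonneg (hF0 _) hpos.le) m (D := (2:ℝ)^m)
  intro n hn
  set k : ℕ := Nat.log 2 n + 1 with hk
  have hnk : n + 1 ≤ 2 ^ k := Nat.lt_pow_succ_log_self (by norm_num) n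
  have hk2n : (2:ℕ) ^ k ≤ 2 * n := by
    have := Nat.pow_log_le_self 2 (by omega : n ≠ 0)
    calc (2:ℕ)^k = 2 * 2 ^ Nat.log 2 n := by rw [hk, pow_succ]; ring
    _ ≤ 2 * n := by omega
  -- the padded binomial sum
  set t : ℕ → K := fun j => if j < n + 1 then x ^ j * y ^ (n - j) * (n.choose j : K) else 0 with ht
  have hsum : ∑ j ∈ range (2^k), t j = (x + y) ^ n := by
    rw [add_pow]
    rw [← Finset.sum_subset (Finset.range_subset_range.mpr hnk) (fun j _ hj => by
      simp only [ht]
      rw [if_neg]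
      simpa using hj)]
    exact Finset.sum_congr rfl fun j hj => by simp [ht, Finset.mem_range.mp hj, not_lt.mpr (Nat.lt_succ_iff.mp (Finset.mem_range.mp hj))]
  -- each padded term is bounded by M = (F x + F y)^n
  set M : ℝ := (f x ^ c + f y ^ c) ^ n with hM
  have hM0 : 0 ≤ M := pow_nonneg hpos.le n
  have hterm : ∀ j, j < 2^k → f (t j) ^ c ≤ M := by
    intro j _
    by_cases hj : j < n + 1
    · have : f (t j) ^ c = (f x ^ c) ^ j * (f y ^ c) ^ (n - j) * (n.choose j : ℝ) := by
        simp only [ht, if_pos hj, hFmul, hFpow, hFn]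
      rw [this, hM, add_pow]
      apply Finset.single_le_sum (f := fun j => (f x ^ c) ^ j * (f y ^ c) ^ (n - j) * (n.choose j : ℝ))
        (fun i _ => by positivity) (Finset.mem_range.mpr hj)
    · simp only [ht, if_neg hj, map_zero, Real.zero_rpow hc.ne']
      exact hM0
  have hbig : f ((x + y) ^ n) ^ c ≤ ((2:ℝ)^k)^c * M := by
    rw [← hsum]; exact sum_pow_le f hc k t M hM0 hterm
  rw [hFpow] at hbig
  have h2kc : ((2:ℝ)^k)^c ≤ (2:ℝ)^m * (n:ℝ)^m := by
    have h1 : ((2:ℝ)^k)^c ≤ ((2 * n : ℕ) : ℝ)^c := by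
      apply Real.rpow_le_rpow (by positivity) _ hc.le
      exact_mod_cast hk2n
    have h2 : ((2 * n : ℕ) : ℝ)^c ≤ ((2 * n : ℕ) : ℝ)^(m:ℝ) := by
      apply Real.rpow_le_rpow_of_exponent_le _ (Nat.le_ceil c)
      have : (1:ℕ) ≤ 2 * n := by omega
      exact_mod_cast this
    calc ((2:ℝ)^k)^c ≤ ((2 * n : ℕ) : ℝ)^(m:ℝ) := h1.trans h2
    _ = (2:ℝ)^m * (n:ℝ)^m := by
        rw [Real.rpow_natCast]
        push_cast
        rw [mul_pow]
  have hfinal : (f (x + y) ^ c) ^ n ≤ ((2:ℝ)^m * (n:ℝ)^m) * M :=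
    hbig.trans (mul_le_mul_of_nonneg_right h2kc hM0)
  rw [div_pow, div_le_iff₀ (by positivity)]
  calc (f (x + y) ^ c) ^ n ≤ ((2:ℝ)^m * (n:ℝ)^m) * M := hfinal
  _ = (2:ℝ)^m * (n:ℝ)^m * (f x ^ c + f y ^ c) ^ n := by rw [hM]

variable {K : Type*} [Field K]

noncomputable def rpowMulRingNorm (f : AbsoluteValue K ℝ) {c : ℝ} (hc : 0 < c)
    (hFn : ∀ n : ℕ, f (n : K) ^ c = (n : ℝ)) : MulRingNorm K where
  toFun := fun x => f x ^ c
  map_zero' := by simp [Real.zero_rpow hc.ne']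
  add_le' := artin_add_le f hc hFn
  neg' := fun x => by simp [f.map_neg]
  map_one' := by simp
  map_mul' := fun x y => by simp only [map_mul, Real.mul_rpow (f.nonneg _) (f.nonneg _)]
  eq_zero_of_map_eq_zero' := fun x hx => f.eq_zero.mp ((Real.rpow_eq_zero (f.nonneg x) hc.ne').mp hx)

@[simp] lemma rpowMulRingNorm_apply (f : AbsoluteValue K ℝ) {c : ℝ} (hc : 0 < c)
    (hFn : ∀ n : ℕ, f (n : K) ^ c = (n : ℝ)) (x : K) :
    rpowMulRingNorm f hc hFn x = f x ^ c := rfl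

@[reducible] noncomputable def MulRingNorm.toNormedField (F : MulRingNorm K) : NormedField K where
  norm x := F x
  dist x y := F (x - y)
  dist_self x := by simp
  dist_comm x y := by
    show F (x - y) = F (y - x)
    rw [← neg_sub y x]
    exact F.neg' _
  dist_triangle x y z := by
    show F (x - z) ≤ F (x - y) + F (y - z)
    simpa using map_add_le_add F (x - y) (y - z)
  eq_of_dist_eq_zero := fun h => sub_eq_zero.mp (F.eq_zero_of_map_eq_zero' _ h)
  dist_eq x y := by
    show F (x - y) = F (-x + y)
    rw [neg_add_eq_sub, ← neg_sub, map_neg_eq_map]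
  norm_mul := F.map_mul'

lemma exists_real_ringHom (K : Type*) [NormedField K] [CompleteSpace K] [CharZero K]
    (hq : ∀ q : ℚ, ‖(q : K)‖ = |(q : ℝ)|) : ∃ ι : ℝ →+* K, ∀ r : ℝ, ‖ι r‖ = |r| := by
  have hiso : Isometry (Rat.castHom K) := by
    apply Isometry.of_dist_eq
    intro p q
    have : ((p : K)) - (q : K) = ((p - q : ℚ) : K) := by push_cast; ring
    rw [dist_eq_norm, Rat.dist_eq]
    show ‖(p : K) - (q : K)‖ = _
    rw [this, hq]
    push_cast
    rfl
  have ue : IsUniformInducing (⇑(Rat.castHom ℝ)) := Rat.isUniformEmbedding_coe_real.isUniformInducing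
  have dr : DenseRange (⇑(Rat.castHom ℝ)) := Rat.isDenseEmbedding_coe_real.dense
  have hf : UniformContinuous (⇑(Rat.castHom K)) := hiso.uniformContinuous
  refine ⟨IsDenseInducing.extendRingHom ue dr hf, ?_⟩
  have hcont : Continuous (⇑(IsDenseInducing.extendRingHom ue dr hf)) :=
    (uniformContinuous_uniformly_extend ue dr hf).continuous
  have hfeq : (fun r : ℝ => ‖IsDenseInducing.extendRingHom ue dr hf r‖) = fun r => |r| := by
    apply DenseRange.equalizer dr (by fun_prop) (by fun_prop)
    funext q
    show ‖(ue.isDenseInducing dr).extend (⇑(Rat.castHom K)) (Rat.castHom ℝ q)‖ = _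
    rw [IsDenseInducing.extend_eq _ hiso.continuous]
    simpa using hq q
  exact fun r => congrFun hfeq r

lemma csSup_mul_nonneg {A : Set ℝ} (hne : A.Nonempty) (hbdd : BddAbove A)
    {t : ℝ} (ht : 0 ≤ t) :
    sSup ((fun x => t * x) '' A) = t * sSup A := by
  rcases eq_or_lt_of_le ht with rfl | htpos
  · obtain ⟨a, ha⟩ := hne
    have : (fun x => (0:ℝ) * x) '' A = {0} := by
      apply Set.eq_singleton_iff_nonempty_unique_mem.mpr
      exact ⟨⟨0, ⟨a, ha, zero_mul a⟩⟩, by rintro _ ⟨b, hb, rfl⟩; simp⟩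
    rw [this]
    simp
  · have hbddim : BddAbove ((fun x => t * x) '' A) := by
      obtain ⟨B, hB⟩ := hbdd
      exact ⟨t * B, by rintro _ ⟨a, ha, rfl⟩; exact mul_le_mul_of_nonneg_left (hB ha) ht⟩
    apply le_antisymm
    · apply csSup_le (hne.image _)
      rintro _ ⟨a, ha, rfl⟩
      exact mul_le_mul_of_nonneg_left (le_csSup hbdd ha) ht
    · rw [mul_comm, ← le_div_iff₀ htpos]
      apply csSup_le hne
      intro a ha
      rw [le_div_iff₀ htpos, mul_comm]
      exact le_csSup hbddim ⟨a, ha, rfl⟩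

structure MyCx (K : Type*) where
  re : K
  im : K

namespace MyCx
section FieldPart
variable {K : Type*} [Field K]

@[ext] lemma ext' {z w : MyCx K} (h1 : z.re = w.re) (h2 : z.im = w.im) : z = w := by
  cases z; cases w; cases h1; cases h2; rfl

instance : Zero (MyCx K) := ⟨⟨0, 0⟩⟩
instance : One (MyCx K) := ⟨⟨1, 0⟩⟩
instance : Add (MyCx K) := ⟨fun z w => ⟨z.re + w.re, z.im + w.im⟩⟩
instance : Neg (MyCx K) := ⟨fun z => ⟨-z.re, -z.im⟩⟩
instance : Mul (MyCx K) := ⟨fun z w => ⟨z.re * w.re - z.im * w.im, z.re * w.im + z.im * w.re⟩⟩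

@[simp] lemma zero_re : (0 : MyCx K).re = 0 := rfl
@[simp] lemma zero_im : (0 : MyCx K).im = 0 := rfl
@[simp] lemma one_re : (1 : MyCx K).re = 1 := rfl
@[simp] lemma one_im : (1 : MyCx K).im = 0 := rfl
@[simp] lemma add_re (z w : MyCx K) : (z + w).re = z.re + w.re := rfl
@[simp] lemma add_im (z w : MyCx K) : (z + w).im = z.im + w.im := rfl
@[simp] lemma neg_re (z : MyCx K) : (-z).re = -z.re := rfl
@[simp] lemma neg_im (z : MyCx K) : (-z).im = -z.im := rfl
@[simp] lemma mul_re (z w : MyCx K) : (z * w).re = z.re * w.re - z.im * w.im := rfl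
@[simp] lemma mul_im (z w : MyCx K) : (z * w).im = z.re * w.im + z.im * w.re := rfl

instance commRing : CommRing (MyCx K) where
  add_assoc a b c := by ext <;> simp <;> ring
  zero_add a := by ext <;> simp
  add_zero a := by ext <;> simp
  add_comm a b := by ext <;> simp <;> ring
  neg_add_cancel a := by ext <;> simp
  left_distrib a b c := by ext <;> simp <;> ring
  right_distrib a b c := by ext <;> simp <;> ring
  zero_mul a := by ext <;> simp
  mul_zero a := by ext <;> simp
  mul_assoc a b c := by ext <;> simp <;> ring
  one_mul a := by ext <;> simp
  mul_one a := by ext <;> simp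
  mul_comm a b := by ext <;> simp <;> ring
  nsmul := nsmulRec
  zsmul := zsmulRec

@[simp] lemma sub_re (z w : MyCx K) : (z - w).re = z.re - w.re := by
  show (z + -w).re = _; simp [sub_eq_add_neg]
@[simp] lemma sub_im (z w : MyCx K) : (z - w).im = z.im - w.im := by
  show (z + -w).im = _; simp [sub_eq_add_neg]

lemma zero_iff {z : MyCx K} : z = 0 ↔ z.re = 0 ∧ z.im = 0 :=
  ⟨fun h => by simp [h], fun ⟨h1, h2⟩ => by ext <;> simp [h1, h2]⟩

lemma sq_add_sq_ne_zero (h : ∀ x : K, x * x ≠ -1) {a b : K} (hab : ¬(a = 0 ∧ b = 0)) :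
    a * a + b * b ≠ 0 := by
  intro habs
  by_cases hb : b = 0
  · subst hb
    simp only [mul_zero, add_zero, mul_self_eq_zero] at habs
    exact hab ⟨habs, rfl⟩
  · apply h (a / b)
    field_simp
    linear_combination habs

/-- If `-1` is not a square in `K`, then `MyCx K` is a field. -/
@[reducible] noncomputable def field (h : ∀ x : K, x * x ≠ -1) : Field (MyCx K) :=
  { MyCx.commRing with
    inv := fun z => ⟨z.re / (z.re * z.re + z.im * z.im), -z.im / (z.re * z.re + z.im * z.im)⟩
    exists_pair_ne := ⟨0, 1, fun habs => by simpa using congrArg MyCx.re habs⟩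
    mul_inv_cancel := fun z hz => by
      have hd : z.re * z.re + z.im * z.im ≠ 0 :=
        sq_add_sq_ne_zero h fun ⟨h1, h2⟩ => hz (zero_iff.mpr ⟨h1, h2⟩)
      ext
      · show z.re * (z.re / _) - z.im * (-z.im / _) = 1
        field_simp
        rw [div_eq_one_iff_eq (by rw [sq, sq]; exact hd)]; ring
      · show z.re * (-z.im / _) + z.im * (z.re / _) = 0
        field_simp
        ring
    inv_zero := by
      show (⟨0 / _, -(0:K) / _⟩ : MyCx K) = 0
      ext <;> simp
    nnqsmul := _
    qsmul := _ }

/-- The inclusion of `K` into `MyCx K`. -/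
def inc : K →+* MyCx K where
  toFun a := ⟨a, 0⟩
  map_one' := rfl
  map_mul' a b := by ext <;> simp
  map_zero' := rfl
  map_add' a b := by ext <;> simp

@[simp] lemma inc_re (a : K) : (inc a).re = a := rfl
@[simp] lemma inc_im (a : K) : (inc a).im = 0 := rfl

end FieldPart

section NormedPart
variable {K : Type*} [NormedField K]

/-- The `ℓ¹`-norm on `MyCx K`. -/
noncomputable def n1 (z : MyCx K) : ℝ := ‖z.re‖ + ‖z.im‖

lemma n1_nonneg (z : MyCx K) : 0 ≤ n1 z := add_nonneg (norm_nonneg _) (norm_nonneg _)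

lemma n1_eq_zero {z : MyCx K} (h : n1 z = 0) : z = 0 := by
  have h1 := norm_nonneg z.re
  have h2 := norm_nonneg z.im
  rw [n1] at h
  refine zero_iff.mpr ⟨norm_eq_zero.mp (by linarith), norm_eq_zero.mp (by linarith)⟩

lemma n1_zero : n1 (0 : MyCx K) = 0 := by simp [n1]

lemma n1_add_le (z w : MyCx K) : n1 (z + w) ≤ n1 z + n1 w := by
  simp only [n1, add_re, add_im]
  have := norm_add_le z.re w.re
  have := norm_add_le z.im w.im
  linarith

lemma n1_neg (z : MyCx K) : n1 (-z) = n1 z := by simp [n1]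

lemma n1_mul_le (z w : MyCx K) : n1 (z * w) ≤ n1 z * n1 w := by
  simp only [n1, mul_re, mul_im]
  have h1 : ‖z.re * w.re - z.im * w.im‖ ≤ ‖z.re‖ * ‖w.re‖ + ‖z.im‖ * ‖w.im‖ := by
    refine (norm_sub_le _ _).trans ?_
    rw [norm_mul, norm_mul]
  have h2 : ‖z.re * w.im + z.im * w.re‖ ≤ ‖z.re‖ * ‖w.im‖ + ‖z.im‖ * ‖w.re‖ := by
    refine (norm_add_le _ _).trans ?_
    rw [norm_mul, norm_mul]
  nlinarith [norm_nonneg z.re, norm_nonneg z.im, norm_nonneg w.re, norm_nonneg w.im]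

lemma n1_inc_mul (a : K) (z : MyCx K) : n1 (inc a * z) = ‖a‖ * n1 z := by
  simp only [n1, mul_re, mul_im, inc_re, inc_im, zero_mul, sub_zero, add_zero, norm_mul]
  ring

variable (ι : ℝ →+* K)

/-- The scalar action of `ℂ` on `MyCx K` induced by `ι : ℝ →+* K`. -/
def phi : ℂ →+* MyCx K where
  toFun z := ⟨ι z.re, ι z.im⟩
  map_one' := by ext <;> simp
  map_zero' := by ext <;> simp
  map_add' z w := by ext <;> simp
  map_mul' z w := by ext <;> simp [Complex.mul_re, Complex.mul_im]

@[simp] lemma phi_re (z : ℂ) : (phi ι z).re = ι z.re := rfl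
@[simp] lemma phi_im (z : ℂ) : (phi ι z).im = ι z.im := rfl

lemma phi_real (r : ℝ) : phi ι (r : ℂ) = inc (ι r) := by
  ext <;> simp

end NormedPart
end MyCx

namespace MyCx
section GNorm
variable {K : Type*} [NormedField K] (ι : ℝ →+* K)

/-- The renormalized norm on `MyCx K` making the `ℂ`-action isometric. -/
noncomputable def g (z : MyCx K) : ℝ :=
  sSup ((fun w : ℂ => n1 (phi ι w * z)) '' Metric.sphere (0:ℂ) 1)

lemma oneS : (1 : ℂ) ∈ Metric.sphere (0:ℂ) 1 := by simp

lemma memS {w : ℂ} (hw : w ∈ Metric.sphere (0:ℂ) 1) : ‖w‖ = 1 := by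
  simpa using hw

variable (hiso : ∀ r : ℝ, ‖ι r‖ = |r|)

lemma gb_ne (z : MyCx K) : ((fun w : ℂ => n1 (phi ι w * z)) '' Metric.sphere (0:ℂ) 1).Nonempty :=
  ⟨_, ⟨1, oneS, rfl⟩⟩

include hiso in
lemma n1_phi_le {w : ℂ} (hw : ‖w‖ = 1) : n1 (phi ι w) ≤ 2 := by
  have h1 : n1 (phi ι w) = |w.re| + |w.im| := by simp [n1, hiso]
  have h2 := Complex.abs_re_le_norm w
  have h3 := Complex.abs_im_le_norm w
  rw [hw] at h2 h3
  linarith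

include hiso in
lemma gb_bdd (z : MyCx K) :
    BddAbove ((fun w : ℂ => n1 (phi ι w * z)) '' Metric.sphere (0:ℂ) 1) := by
  refine ⟨2 * n1 z, ?_⟩
  rintro _ ⟨w, hw, rfl⟩
  calc n1 (phi ι w * z) ≤ n1 (phi ι w) * n1 z := n1_mul_le _ _
  _ ≤ 2 * n1 z := mul_le_mul_of_nonneg_right (n1_phi_le ι hiso (memS hw)) (n1_nonneg z)

include hiso in
lemma le_g (z : MyCx K) : n1 z ≤ g ι z :=
  le_csSup (gb_bdd ι hiso z) ⟨1, oneS, by simp⟩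

include hiso in
lemma g_le (z : MyCx K) : g ι z ≤ 2 * n1 z := by
  apply csSup_le (gb_ne ι z)
  rintro _ ⟨w, hw, rfl⟩
  calc n1 (phi ι w * z) ≤ n1 (phi ι w) * n1 z := n1_mul_le _ _
  _ ≤ 2 * n1 z := mul_le_mul_of_nonneg_right (n1_phi_le ι hiso (memS hw)) (n1_nonneg z)

include hiso in
lemma g_nonneg (z : MyCx K) : 0 ≤ g ι z := (n1_nonneg z).trans (le_g ι hiso z)

include hiso in
lemma g_zero : g ι (0 : MyCx K) = 0 :=
  le_antisymm (by simpa [n1_zero] using g_le ι hiso 0) (g_nonneg ι hiso 0)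

include hiso in
lemma g_eq_zero {z : MyCx K} (h : g ι z = 0) : z = 0 :=
  n1_eq_zero (le_antisymm (h ▸ le_g ι hiso z) (n1_nonneg z))

include hiso in
lemma g_neg (z : MyCx K) : g ι (-z) = g ι z := by
  unfold g
  congr 1
  apply Set.image_congr
  intro w _
  show n1 (phi ι w * -z) = n1 (phi ι w * z)
  rw [mul_neg, n1_neg]

include hiso in
lemma g_add_le (z w : MyCx K) : g ι (z + w) ≤ g ι z + g ι w := by
  apply csSup_le (gb_ne ι _)
  rintro _ ⟨u, hu, rfl⟩
  calc n1 (phi ι u * (z + w)) = n1 (phi ι u * z + phi ι u * w) := by rw [mul_add]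
  _ ≤ n1 (phi ι u * z) + n1 (phi ι u * w) := n1_add_le _ _
  _ ≤ g ι z + g ι w := add_le_add (le_csSup (gb_bdd ι hiso z) ⟨u, hu, rfl⟩)
      (le_csSup (gb_bdd ι hiso w) ⟨u, hu, rfl⟩)

include hiso in
lemma g_mul_le (z w : MyCx K) : g ι (z * w) ≤ g ι z * g ι w := by
  have h1 : g ι (z * w) ≤ g ι z * n1 w := by
    apply csSup_le (gb_ne ι _)
    rintro _ ⟨u, hu, rfl⟩
    calc n1 (phi ι u * (z * w)) = n1 ((phi ι u * z) * w) := by rw [mul_assoc]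
    _ ≤ n1 (phi ι u * z) * n1 w := n1_mul_le _ _
    _ ≤ g ι z * n1 w := mul_le_mul_of_nonneg_right (le_csSup (gb_bdd ι hiso z) ⟨u, hu, rfl⟩)
        (n1_nonneg w)
  exact h1.trans (mul_le_mul_of_nonneg_left (le_g ι hiso w) (g_nonneg ι hiso z))

include hiso in
lemma g_smul_unit {u : ℂ} (hu : ‖u‖ = 1) (z : MyCx K) : g ι (phi ι u * z) = g ι z := by
  unfold g
  congr 1
  apply Set.Subset.antisymm
  · rintro _ ⟨w, hw, rfl⟩
    have h1 : ‖w * u‖ = 1 := by rw [norm_mul, memS hw, hu, mul_one]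
    refine ⟨w * u, by simpa using h1, ?_⟩
    show n1 (phi ι (w * u) * z) = n1 (phi ι w * (phi ι u * z))
    rw [map_mul, mul_assoc]
  · rintro _ ⟨w, hw, rfl⟩
    refine ⟨w * u⁻¹, ?_, ?_⟩
    · have : ‖w * u⁻¹‖ = 1 := by
        rw [norm_mul, norm_inv, memS hw, hu]; norm_num
      simpa using this
    · show n1 (phi ι (w * u⁻¹) * (phi ι u * z)) = n1 (phi ι w * z)
      rw [← mul_assoc, ← map_mul, mul_assoc, inv_mul_cancel₀ (by
        intro h0; rw [h0, norm_zero] at hu; norm_num at hu), mul_one]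

include hiso in
lemma g_real_smul (r : ℝ) (z : MyCx K) : g ι (phi ι (r : ℂ) * z) = |r| * g ι z := by
  have himg : (fun w : ℂ => n1 (phi ι w * (phi ι (r:ℂ) * z))) '' Metric.sphere (0:ℂ) 1
      = (fun x => |r| * x) '' ((fun w : ℂ => n1 (phi ι w * z)) '' Metric.sphere (0:ℂ) 1) := by
    rw [← Set.image_comp]
    apply Set.image_congr
    intro w _
    show n1 (phi ι w * (phi ι (r:ℂ) * z)) = |r| * n1 (phi ι w * z)
    rw [mul_left_comm, phi_real, n1_inc_mul, hiso]
  rw [g, himg, csSup_mul_nonneg (gb_ne ι z) (gb_bdd ι hiso z) (abs_nonneg r)]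
  rfl

include hiso in
lemma g_smul (w : ℂ) (z : MyCx K) : g ι (phi ι w * z) = ‖w‖ * g ι z := by
  rcases eq_or_ne w 0 with rfl | hw
  · simp [map_zero, zero_mul, g_zero ι hiso]
  · have hwpos : (0:ℝ) < ‖w‖ := norm_pos_iff.mpr hw
    have hdecomp : w = ((‖w‖ : ℝ) : ℂ) * (w / ((‖w‖ : ℝ) : ℂ)) := by
      have ha : ((‖w‖ : ℝ) : ℂ) ≠ 0 := Complex.ofReal_ne_zero.mpr hwpos.ne'
      rw [← mul_div_assoc, mul_comm, mul_div_assoc, div_self ha, mul_one]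
    have hu : ‖w / ((‖w‖ : ℝ) : ℂ)‖ = 1 := by
      rw [norm_div, Complex.norm_real, norm_norm, div_self hwpos.ne']
    calc g ι (phi ι w * z)
        = g ι (phi ι ((‖w‖ : ℝ) : ℂ) * (phi ι (w / ((‖w‖ : ℝ) : ℂ)) * z)) := by
          rw [← mul_assoc, ← map_mul, ← hdecomp]
      _ = |‖w‖| * g ι (phi ι (w / ((‖w‖ : ℝ) : ℂ)) * z) := g_real_smul ι hiso _ _
      _ = ‖w‖ * g ι z := by rw [abs_of_nonneg (norm_nonneg w), g_smul_unit ι hiso hu]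

end GNorm
end MyCx

/-- Real Gelfand–Mazur: a complete normed field with an isometric copy of `ℝ`
is isometrically isomorphic to `ℝ` or `ℂ`. -/
theorem realGM (K : Type*) [NormedField K] [CompleteSpace K] (ι : ℝ →+* K)
    (hiso : ∀ r : ℝ, ‖ι r‖ = |r|) :
    (∃ e : K ≃+* ℝ, ∀ x, |e x| = ‖x‖) ∨ (∃ e : K ≃+* ℂ, ∀ x, ‖e x‖ = ‖x‖) := by
  by_cases hi : ∃ i : K, i * i = -1
  · right
    obtain ⟨i, hi⟩ := hi
    letI : Algebra ℝ K := ι.toAlgebra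
    let φa : ℂ →ₐ[ℝ] K := Complex.lift ⟨i, hi⟩
    have hφr : ∀ r : ℝ, φa ((r : ℝ) : ℂ) = ι r := fun r => by
      rw [show ((r : ℝ) : ℂ) = algebraMap ℝ ℂ r from rfl, AlgHom.commutes]
      rfl
    have hNI : ‖φa Complex.I‖ = 1 := by
      have h2 : ‖φa Complex.I‖ * ‖φa Complex.I‖ = 1 := by
        rw [← norm_mul, ← map_mul, Complex.I_mul_I, map_neg, map_one, norm_neg, norm_one]
      rcases mul_self_eq_one_iff.mp h2 with h | h
      · exact h
      · nlinarith [norm_nonneg (φa Complex.I)]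
    have hub : ∀ z : ℂ, ‖φa z‖ ≤ 2 * ‖z‖ := by
      intro z
      conv_lhs => rw [← Complex.re_add_im z]
      rw [map_add, map_mul]
      calc ‖φa ((z.re : ℝ) : ℂ) + φa ((z.im : ℝ) : ℂ) * φa Complex.I‖
          ≤ ‖φa ((z.re : ℝ) : ℂ)‖ + ‖φa ((z.im : ℝ) : ℂ)‖ * ‖φa Complex.I‖ := by
            refine (norm_add_le _ _).trans ?_
            rw [norm_mul]
        _ = |z.re| + |z.im| := by rw [hφr, hφr, hiso, hiso, hNI, mul_one]
        _ ≤ 2 * ‖z‖ := by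
            have h1 := Complex.abs_re_le_norm z
            have h2 := Complex.abs_im_le_norm z
            linarith
    have hle : ∀ z : ℂ, ‖φa z‖ ≤ ‖z‖ := by
      intro z
      rcases eq_or_ne z 0 with rfl | hz
      · simp
      have hzpos : 0 < ‖z‖ := norm_pos_iff.mpr hz
      by_contra hlt
      push_neg at hlt
      have h1 : 1 < ‖φa z‖ / ‖z‖ := (one_lt_div hzpos).mpr hlt
      refine auxLeOne (a := ‖φa z‖ / ‖z‖) (B := 2) (fun n => ?_) h1
      rw [div_pow, div_le_iff₀ (pow_pos hzpos n)]
      calc ‖φa z‖ ^ n = ‖φa (z ^ n)‖ := by rw [map_pow, norm_pow]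
        _ ≤ 2 * ‖z ^ n‖ := hub _
        _ = 2 * ‖z‖ ^ n := by rw [norm_pow]
    have hN : ∀ z : ℂ, ‖φa z‖ = ‖z‖ := by
      intro z
      rcases eq_or_ne z 0 with rfl | hz
      · simp
      have hzpos : 0 < ‖z‖ := norm_pos_iff.mpr hz
      refine le_antisymm (hle z) ?_
      have hconj : ‖φa z‖ * ‖φa (starRingEnd ℂ z)‖ = ‖z‖ * ‖z‖ := by
        rw [← norm_mul, ← map_mul, Complex.mul_conj, hφr, hiso,
          abs_of_nonneg (Complex.normSq_nonneg z), Complex.normSq_eq_norm_sq]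
        ring
      have hc := hle (starRingEnd ℂ z)
      rw [RCLike.norm_conj] at hc
      nlinarith [norm_nonneg (φa z), norm_nonneg (φa (starRingEnd ℂ z))]
    letI : Algebra ℂ K := φa.toRingHom.toAlgebra
    letI : NormedAlgebra ℂ K :=
      { norm_smul_le := fun z x => by
          rw [Algebra.smul_def]
          show ‖φa z * x‖ ≤ ‖z‖ * ‖x‖
          rw [norm_mul, hN] }
    let e := NormedRing.algEquivComplexOfComplete (A := K) (fun {a} => isUnit_iff_ne_zero)
    refine ⟨e.symm.toRingEquiv, fun x => ?_⟩
    calc ‖e.symm.toRingEquiv x‖ = ‖φa (e.symm x)‖ := (hN _).symm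
      _ = ‖e (e.symm x)‖ := rfl
      _ = ‖x‖ := by rw [e.apply_symm_apply]
  · left
    push_neg at hi
    letI : Field (MyCx K) := MyCx.field hi
    letI : NormedRing (MyCx K) :=
      { MyCx.commRing with
        norm := MyCx.g ι
        dist := fun z w => MyCx.g ι (z - w)
        dist_self := fun z => by simp [MyCx.g_zero ι hiso]
        dist_comm := fun z w => by
          show MyCx.g ι (z - w) = MyCx.g ι (w - z)
          rw [← MyCx.g_neg ι hiso (w - z), neg_sub]
        dist_triangle := fun x y z => by
          show MyCx.g ι (x - z) ≤ MyCx.g ι (x - y) + MyCx.g ι (y - z)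
          simpa using MyCx.g_add_le ι hiso (x - y) (y - z)
        eq_of_dist_eq_zero := fun h => sub_eq_zero.mp (MyCx.g_eq_zero ι hiso h)
        dist_eq := fun z w => by
          show MyCx.g ι (z - w) = MyCx.g ι (-z + w)
          rw [neg_add_eq_sub, ← neg_sub, MyCx.g_neg ι hiso]
        norm_mul_le := MyCx.g_mul_le ι hiso }
    haveI : CompleteSpace (MyCx K) := by
      apply Metric.complete_of_cauchySeq_tendsto
      intro u hu
      have key : ∀ m n : ℕ, dist (u m).re (u n).re + dist (u m).im (u n).im
          ≤ dist (u m) (u n) := by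
        intro m n
        rw [dist_eq_norm, dist_eq_norm]
        calc ‖(u m).re - (u n).re‖ + ‖(u m).im - (u n).im‖
            = MyCx.n1 (u m - u n) := by rw [MyCx.n1, MyCx.sub_re, MyCx.sub_im]
          _ ≤ MyCx.g ι (u m - u n) := MyCx.le_g ι hiso _
      have hre : CauchySeq (fun n => (u n).re) := by
        rw [Metric.cauchySeq_iff] at hu ⊢
        intro ε hε
        obtain ⟨N, hN⟩ := hu ε hε
        refine ⟨N, fun m hm n hn => ?_⟩
        have := key m n
        have := @dist_nonneg _ _ ((u m).im) ((u n).im)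
        have := hN m hm n hn
        linarith
      have him : CauchySeq (fun n => (u n).im) := by
        rw [Metric.cauchySeq_iff] at hu ⊢
        intro ε hε
        obtain ⟨N, hN⟩ := hu ε hε
        refine ⟨N, fun m hm n hn => ?_⟩
        have := key m n
        have := @dist_nonneg _ _ ((u m).re) ((u n).re)
        have := hN m hm n hn
        linarith
      obtain ⟨a, ha⟩ := cauchySeq_tendsto_of_complete hre
      obtain ⟨b, hb⟩ := cauchySeq_tendsto_of_complete him
      refine ⟨⟨a, b⟩, ?_⟩
      rw [Metric.tendsto_atTop] at ha hb ⊢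
      intro ε hε
      obtain ⟨N1, hN1⟩ := ha (ε / 5) (by linarith)
      obtain ⟨N2, hN2⟩ := hb (ε / 5) (by linarith)
      refine ⟨max N1 N2, fun n hn => ?_⟩
      have h1 := hN1 n (le_trans (le_max_left _ _) hn)
      have h2 := hN2 n (le_trans (le_max_right _ _) hn)
      rw [dist_eq_norm] at h1 h2
      calc dist (u n) ⟨a, b⟩ = MyCx.g ι (u n - ⟨a, b⟩) := rfl
        _ ≤ 2 * MyCx.n1 (u n - ⟨a, b⟩) := MyCx.g_le ι hiso _
        _ = 2 * (‖(u n).re - a‖ + ‖(u n).im - b‖) := by rw [MyCx.n1, MyCx.sub_re, MyCx.sub_im]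
        _ < ε := by linarith
    letI : Algebra ℂ (MyCx K) := (MyCx.phi ι).toAlgebra
    letI : NormedAlgebra ℂ (MyCx K) :=
      { norm_smul_le := fun z x => by
          rw [Algebra.smul_def]
          show MyCx.g ι (MyCx.phi ι z * x) ≤ ‖z‖ * MyCx.g ι x
          rw [MyCx.g_smul ι hiso] }
    let e := NormedRing.algEquivComplexOfComplete (A := MyCx K) (fun {a} => isUnit_iff_ne_zero)
    have hsurj : Function.Surjective ι := by
      intro x
      obtain ⟨z, hz⟩ := e.surjective (MyCx.inc x)
      have hz' : MyCx.phi ι z = MyCx.inc x := by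
        rw [← hz]
        rfl
      exact ⟨z.re, by simpa using congrArg MyCx.re hz'⟩
    let e' := RingEquiv.ofBijective ι ⟨ι.injective, hsurj⟩
    refine ⟨e'.symm, fun x => ?_⟩
    rw [← hiso (e'.symm x)]
    congr 1
    exact e'.apply_symm_apply x

/-- An absolute value as a `MulRingNorm`. -/
def absoluteValueMulRingNorm (f : AbsoluteValue K ℝ) : MulRingNorm K where
  toFun := f
  map_zero' := map_zero f
  add_le' := f.add_le
  neg' := f.map_neg
  map_one' := map_one f
  map_mul' := map_mul f
  eq_zero_of_map_eq_zero' := fun x => f.eq_zero.mp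

end Aux

/-- Second theorem of Ostrowski: a field complete with respect to an archimedean
(non-ultrametric) absolute value is isomorphic, as a topological field, to `ℝ` or `ℂ`:
there is a ring isomorphism onto `ℝ` or onto `ℂ` which is a homeomorphism for the
topology induced by the absolute value and the usual topology. -/
theorem ostrowski_complete_archimedean {K : Type*} [Field K] (f : AbsoluteValue K ℝ)
    (harch : ¬ ∀ x y : K, f (x + y) ≤ max (f x) (f y))
    (hcomplete : AbsComplete f) :
    (∃ e : K ≃+* ℝ,
        @Continuous K ℝ (absTopology f) _ e ∧ @Continuous ℝ K _ (absTopology f) e.symm) ∨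
    (∃ e : K ≃+* ℂ,
        @Continuous K ℂ (absTopology f) _ e ∧ @Continuous ℂ K _ (absTopology f) e.symm) := by
  classical
  -- Step 1: `f` is unbounded on `ℕ`.
  have hnat : ¬ ∀ n : ℕ, f (n : K) ≤ 1 := by
    intro hbdd
    apply harch
    letI := (absoluteValueMulRingNorm f).toNormedField
    haveI : IsUltrametricDist K :=
      IsUltrametricDist.isUltrametricDist_of_forall_norm_natCast_le_one hbdd
    intro x y
    exact IsUltrametricDist.norm_add_le_max x y
  -- Step 2: `K` has characteristic zero.
  haveI hchz : CharZero K := by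
    rcases CharP.char_is_prime_or_zero K (ringChar K) with hprime | hzero
    · exfalso
      obtain ⟨n, hn⟩ := not_forall.mp hnat
      push_neg at hn
      have hppos : 0 < ringChar K := hprime.pos
      have hne : ((Finset.range (ringChar K)).image (fun j : ℕ => f (j : K))).Nonempty :=
        (Finset.nonempty_range_iff.mpr hppos.ne').image _
      have hmod : ∀ m : ℕ, ((m : K)) = (((m % ringChar K : ℕ)) : K) := by
        intro m
        conv_lhs => rw [← Nat.div_add_mod m (ringChar K)]
        push_cast
        rw [show ((ringChar K : K)) = 0 from CharP.cast_eq_zero K _]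
        ring
      have hle : ∀ m : ℕ, f (m : K) ≤
          ((Finset.range (ringChar K)).image (fun j : ℕ => f (j : K))).max' hne := by
        intro m
        rw [hmod m]
        apply Finset.le_max'
        exact Finset.mem_image_of_mem _ (Finset.mem_range.mpr (Nat.mod_lt m hppos))
      refine auxLeOne (a := f (n : K))
        (B := ((Finset.range (ringChar K)).image (fun j : ℕ => f (j : K))).max' hne)
        (fun k => ?_) hn
      calc f (n : K) ^ k = f ((n : K) ^ k) := (map_pow f _ k).symm
        _ = f (((n ^ k : ℕ) : K)) := by push_cast; ring_nf
        _ ≤ _ := hle _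
    · haveI : CharP K 0 := hzero ▸ ringChar.charP K
      exact CharP.charP_to_charZero K
  -- Step 3: Ostrowski's first theorem on `ℚ`.
  set gQ : MulRingNorm ℚ :=
    { toFun := fun q => f ((q : K))
      map_zero' := by simp
      add_le' := fun p q => by push_cast; exact f.add_le _ _
      neg' := fun q => by push_cast; exact f.map_neg _
      map_one' := by simp
      map_mul' := fun p q => by push_cast; exact map_mul f _ _
      eq_zero_of_map_eq_zero' := fun q hq0 => by
        exact_mod_cast f.eq_zero.mp hq0 } with hgQ
  have hgnb : ¬ ∀ n : ℕ, gQ (n : ℚ) ≤ 1 := by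
    intro hb
    apply hnat
    intro n
    have h2 : f (((n : ℚ) : K)) ≤ 1 := hb n
    rwa [show (((n : ℚ) : K)) = ((n : K)) by push_cast; rfl] at h2
  obtain ⟨c, hc, hceq⟩ := AbsoluteValue.isEquiv_iff_exists_rpow_eq.1
    (Rat.AbsoluteValue.equiv_real_of_unbounded (f := {
      toFun := fun q : ℚ => f ((q : K))
      map_mul' := fun p q => by
        show f ((p * q : ℚ) : K) = f (p : K) * f (q : K)
        push_cast; exact map_mul f _ _
      nonneg' := fun q => f.nonneg _
      eq_zero' := fun q => by
        show f (q : K) = 0 ↔ q = 0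
        rw [f.eq_zero]; exact Rat.cast_eq_zero
      add_le' := fun p q => by
        show f ((p + q : ℚ) : K) ≤ f (p : K) + f (q : K)
        push_cast; exact f.add_le _ _ }) hgnb)
  have hq : ∀ q : ℚ, f ((q : K)) ^ c = |(q : ℝ)| := by
    intro q
    have h1 := congrFun hceq q
    rw [Rat.AbsoluteValue.real_eq_abs] at h1
    have h2 : f ((q : K)) ^ c = ((|q| : ℚ) : ℝ) := h1
    rw [h2]
    push_cast
    rfl
  have hFn : ∀ n : ℕ, f ((n : K)) ^ c = (n : ℝ) := by
    intro n
    have h1 := hq (n : ℚ)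
    rw [show (((n : ℚ) : K)) = ((n : K)) by push_cast; rfl] at h1
    rw [h1]
    simp
  -- Step 4: the normed field structure.
  letI : NormedField K := (rpowMulRingNorm f hc hFn).toNormedField
  have hnorm : ∀ x : K, ‖x‖ = f x ^ c := fun x => rpowMulRingNorm_apply f hc hFn x
  have hiff : ∀ (d : K) (ε : ℝ), 0 < ε → (f d < ε ↔ ‖d‖ < ε ^ c) := by
    intro d ε hε
    rw [hnorm]
    exact (Real.rpow_lt_rpow_iff (f.nonneg d) hε.le hc).symm
  have hinv : ∀ ε : ℝ, 0 < ε → (ε ^ (1/c)) ^ c = ε := by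
    intro ε hε
    rw [← Real.rpow_mul hε.le, one_div, inv_mul_cancel₀ hc.ne', Real.rpow_one]
  haveI : CompleteSpace K := by
    apply Metric.complete_of_cauchySeq_tendsto
    intro u hu
    rw [Metric.cauchySeq_iff] at hu
    have hcauchy : AbsCauchySeq f u := by
      intro ε hε
      obtain ⟨N, hN⟩ := hu (ε ^ c) (Real.rpow_pos_of_pos hε c)
      exact ⟨N, fun m hm n hn =>
        (hiff _ ε hε).mpr (by rw [← dist_eq_norm]; exact hN m hm n hn)⟩
    obtain ⟨l, hl⟩ := hcomplete u hcauchy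
    refine ⟨l, ?_⟩
    rw [Metric.tendsto_atTop]
    intro ε hε
    obtain ⟨N, hN⟩ := hl (ε ^ (1/c)) (Real.rpow_pos_of_pos hε _)
    refine ⟨N, fun n hn => ?_⟩
    have h2 := (hiff (u n - l) _ (Real.rpow_pos_of_pos hε (1/c))).mp (hN n hn)
    rw [hinv ε hε] at h2
    rw [dist_eq_norm]
    exact h2
  -- Step 5: topology identification.
  have hball : ∀ (a : K) (r : ℝ), 0 < r → {x : K | f (x - a) < r} = Metric.ball a (r ^ c) := by
    intro a r hr
    ext x
    rw [Metric.mem_ball, dist_eq_norm, Set.mem_setOf_eq, hiff _ r hr]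
  have htop : absTopology f = (inferInstance : TopologicalSpace K) := by
    unfold absTopology
    apply le_antisymm
    · rw [TopologicalSpace.le_def]
      intro s hs
      rw [Metric.isOpen_iff] at hs
      show TopologicalSpace.GenerateOpen _ s
      have hrep : s = ⋃₀ {t | (∃ (a : K) (r : ℝ), 0 < r ∧ t = {x : K | f (x - a) < r}) ∧ t ⊆ s} := by
        apply Set.Subset.antisymm
        · intro y hy
          obtain ⟨ε, hε, hb⟩ := hs y hy
          refine ⟨{x : K | f (x - y) < ε ^ (1/c)},
            ⟨⟨y, ε ^ (1/c), Real.rpow_pos_of_pos hε _, rfl⟩, ?_⟩, ?_⟩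
          · rw [hball y _ (Real.rpow_pos_of_pos hε _), hinv ε hε]
            exact hb
          · show f (y - y) < ε ^ (1/c)
            simpa using Real.rpow_pos_of_pos hε (1/c)
        · rintro y ⟨t, ⟨_, hts⟩, hyt⟩
          exact hts hyt
      rw [hrep]
      exact TopologicalSpace.GenerateOpen.sUnion _ fun t ht => TopologicalSpace.GenerateOpen.basic t ht.1
    · rw [TopologicalSpace.le_generateFrom_iff_subset_isOpen]
      rintro s ⟨a, r, hr, rfl⟩
      rw [hball a r hr]
      simp only [Set.mem_setOf_eq]
      exact Metric.isOpen_ball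
  -- Step 6: the real embedding and Gelfand–Mazur.
  have hqnorm : ∀ q : ℚ, ‖(q : K)‖ = |(q : ℝ)| := fun q => by rw [hnorm]; exact hq q
  obtain ⟨ι, hiso⟩ := exists_real_ringHom K hqnorm
  rcases realGM K ι hiso with ⟨e, he⟩ | ⟨e, he⟩
  · left
    refine ⟨e, ?_, ?_⟩
    · rw [htop]
      refine (Isometry.of_dist_eq fun x y => ?_).continuous
      rw [Real.dist_eq, dist_eq_norm]
      calc |e x - e y| = |e (x - y)| := by rw [map_sub]
        _ = ‖x - y‖ := he _
    · rw [htop]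
      refine (Isometry.of_dist_eq fun r s => ?_).continuous
      rw [dist_eq_norm, Real.dist_eq]
      calc ‖e.symm r - e.symm s‖ = ‖e.symm (r - s)‖ := by rw [map_sub]
        _ = |e (e.symm (r - s))| := (he _).symm
        _ = |r - s| := by rw [e.apply_symm_apply]
  · right
    refine ⟨e, ?_, ?_⟩
    · rw [htop]
      refine (Isometry.of_dist_eq fun x y => ?_).continuous
      rw [dist_eq_norm, dist_eq_norm]
      calc ‖e x - e y‖ = ‖e (x - y)‖ := by rw [map_sub]
        _ = ‖x - y‖ := he _
    · rw [htop]
      refine (Isometry.of_dist_eq fun r s => ?_).continuous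
      rw [dist_eq_norm, dist_eq_norm]
      calc ‖e.symm r - e.symm s‖ = ‖e.symm (r - s)‖ := by rw [map_sub]
        _ = ‖e (e.symm (r - s))‖ := (he _).symm
        _ = ‖r - s‖ := by rw [e.apply_symm_apply]
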